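/- arXiv:1010.6216 — 4 statements merged into one kernel-verified Lean document; each statement's English description precedes it below -/
import Mathlib

section
/- Assume Schanuel's conjecture. Let α, β, γ be nonzero complex numbers with α ≠ 1 and β^γ ≠ 1, such that at least one of α, β^γ is irrational, at least one is algebraic, and β^{γα} = (β^γ)^α is algebraic. Then α^{β^γ} is transcendental. -/
/-- Schanuel's conjecture. -/
def SchanuelConjecture : Prop :=
  ∀ (n : ℕ) (α : Fin n → ℂ), LinearIndependent ℚ α →
    ∃ g : Fin n → ℂ,
      (∀ i, g i ∈ Set.range α ∪ Set.range (fun i => Complex.exp (α i))) ∧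
      AlgebraicIndependent ℚ g


open Complex

lemma aux_int_of_mem (A₀ : Subalgebra ℚ ℂ) {x : ℂ} (hx : x ∈ A₀) : IsIntegral A₀ x := by
  have : x = algebraMap A₀ ℂ ⟨x, hx⟩ := rfl
  rw [this]; exact isIntegral_algebraMap

lemma aux_int_of_alg (A₀ : Subalgebra ℚ ℂ) {c : ℂ} (hc : IsAlgebraic ℚ c) : IsIntegral A₀ c :=
  (isAlgebraic_iff_isIntegral.mp hc).tower_top

lemma aux_kill {n : ℕ} {g : Fin (n+1) → ℂ} (hg : AlgebraicIndependent ℚ g) (i : Fin (n+1))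
    (h : IsIntegral (Algebra.adjoin ℚ (Set.range (g ∘ i.succAbove))) (g i)) : False := by
  have h1 : AlgebraicIndependent ℚ (g ∘ i.succAbove) := hg.comp _ Fin.succAbove_right_injective
  have h2 : AlgebraicIndependent ℚ
      (fun o : Option (Fin n) => o.elim (g i) (g ∘ i.succAbove)) := by
    have h3 := hg.comp (finSuccEquiv' i).symm (finSuccEquiv' i).symm.injective
    convert h3 using 1
    funext o
    cases o with
    | none => simp
    | some j => simp [finSuccEquiv'_symm_some]
  exact (h1.option_iff_transcendental (g i)).mp h2 h.isAlgebraic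

lemma aux_mem {n : ℕ} (g : Fin (n+1) → ℂ) {i j : Fin (n+1)} (h : j ≠ i) :
    g j ∈ Algebra.adjoin ℚ (Set.range (g ∘ i.succAbove)) := by
  obtain ⟨k, hk⟩ := Fin.exists_succAbove_eq h
  exact Algebra.subset_adjoin ⟨k, by simp [hk]⟩

lemma aux_kill_pair {n : ℕ} {g : Fin (n+1) → ℂ} (hg : AlgebraicIndependent ℚ g)
    (i j : Fin (n+1)) (hij : j ≠ i) {c : ℂ} (hc : IsAlgebraic ℚ c) (h : g i = c * g j) :
    False :=
  aux_kill hg i (h ▸ (aux_int_of_alg _ hc).mul (aux_int_of_mem _ (aux_mem g hij)))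

lemma aux_kill_prod {n : ℕ} {g : Fin (n+1) → ℂ} (hg : AlgebraicIndependent ℚ g)
    (i j k : Fin (n+1)) (hij : j ≠ i) (hik : k ≠ i) {c : ℂ} (hc : IsAlgebraic ℚ c)
    (h : g i = c * (g j * g k)) : False :=
  aux_kill hg i (h ▸ (aux_int_of_alg _ hc).mul
    ((aux_int_of_mem _ (aux_mem g hij)).mul (aux_int_of_mem _ (aux_mem g hik))))

lemma aux_kill_two {n : ℕ} {g : Fin (n+1) → ℂ} (hg : AlgebraicIndependent ℚ g)
    (i j k l : Fin (n+1)) (hij : j ≠ i) (hik : k ≠ i) (hil : l ≠ i) {c₁ c₂ : ℂ}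
    (hc₁ : IsAlgebraic ℚ c₁) (hc₂ : IsAlgebraic ℚ c₂)
    (h : g i = c₁ * g j + c₂ * (g k * g l)) : False :=
  aux_kill hg i (h ▸ ((aux_int_of_alg _ hc₁).mul (aux_int_of_mem _ (aux_mem g hij))).add
    ((aux_int_of_alg _ hc₂).mul
      ((aux_int_of_mem _ (aux_mem g hik)).mul (aux_int_of_mem _ (aux_mem g hil)))))

lemma aux_kill_dup {n : ℕ} {g : Fin (n+1) → ℂ} (hg : AlgebraicIndependent ℚ g)
    {i j : Fin (n+1)} (hij : j ≠ i) (h : g i = g j) : False :=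
  hij (hg.injective h).symm


open Complex

lemma aux_alg_add {x y : ℂ} (hx : IsAlgebraic ℚ x) (hy : IsAlgebraic ℚ y) :
    IsAlgebraic ℚ (x + y) :=
  ((isAlgebraic_iff_isIntegral.mp hx).add (isAlgebraic_iff_isIntegral.mp hy)).isAlgebraic

lemma aux_alg_mul {x y : ℂ} (hx : IsAlgebraic ℚ x) (hy : IsAlgebraic ℚ y) :
    IsAlgebraic ℚ (x * y) :=
  ((isAlgebraic_iff_isIntegral.mp hx).mul (isAlgebraic_iff_isIntegral.mp hy)).isAlgebraic

lemma aux_alg_rat (r : ℚ) : IsAlgebraic ℚ ((r : ℂ)) := isAlgebraic_rat ℚ r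

lemma aux_alg_neg {x : ℂ} (hx : IsAlgebraic ℚ x) : IsAlgebraic ℚ (-x) :=
  (isAlgebraic_iff_isIntegral.mp hx).neg.isAlgebraic

lemma aux_alg_inv {x : ℂ} (hx : IsAlgebraic ℚ x) : IsAlgebraic ℚ x⁻¹ := hx.inv

lemma aux_alg_div {x y : ℂ} (hx : IsAlgebraic ℚ x) (hy : IsAlgebraic ℚ y) :
    IsAlgebraic ℚ (x / y) := by
  rw [div_eq_mul_inv]; exact aux_alg_mul hx hy.inv

lemma aux_alg_pow {x : ℂ} (hx : IsAlgebraic ℚ x) (n : ℕ) : IsAlgebraic ℚ (x ^ n) :=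
  ((isAlgebraic_iff_isIntegral.mp hx).pow n).isAlgebraic

lemma aux_alg_zpow {x : ℂ} (hx : IsAlgebraic ℚ x) (n : ℤ) : IsAlgebraic ℚ (x ^ n) := by
  rcases n with n | n
  · rw [Int.ofNat_eq_coe, zpow_natCast]; exact aux_alg_pow hx n
  · rw [zpow_negSucc]; exact (aux_alg_pow hx (n+1)).inv

lemma aux_zpow_alg {y : ℂ} {k : ℤ} (hk : k ≠ 0) (h : IsAlgebraic ℚ (y ^ k)) :
    IsAlgebraic ℚ y := by
  rcases k with n | n
  · rw [Int.ofNat_eq_coe, zpow_natCast] at h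
    exact IsAlgebraic.of_pow (Nat.pos_of_ne_zero (by simpa using hk)) h
  · rw [zpow_negSucc] at h
    exact IsAlgebraic.of_pow (Nat.succ_pos n) (IsAlgebraic.inv_iff.mp h)

/-- If `exp x = z` is algebraic and `y = exp (r x)` for a nonzero rational `r`,
then `y` is algebraic. -/
lemma aux_pow_alg {x y z : ℂ} (r : ℚ) (hr : r ≠ 0)
    (h1 : Complex.exp x = z) (h2 : y = Complex.exp ((r : ℂ) * x))
    (hz : IsAlgebraic ℚ z) : IsAlgebraic ℚ y := by
  have hden : ((r.den : ℂ)) * ((r : ℂ) * x) = ((r.num : ℂ)) * x := by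
    have : ((r.den : ℚ) * r : ℚ) = ((r.num : ℚ)) := by
      rw [mul_comm]; exact_mod_cast r.mul_den_eq_num
    have h3 : ((r.den : ℂ)) * (r : ℂ) = ((r.num : ℂ)) := by exact_mod_cast congrArg (fun q : ℚ => (q : ℂ)) this
    rw [← mul_assoc, h3]
  have hy : y ^ (r.den : ℕ) = z ^ (r.num : ℤ) := by
    rw [h2, ← Complex.exp_nat_mul, hden, ← h1, ← Complex.exp_int_mul]
  have : IsAlgebraic ℚ (y ^ (r.den : ℕ)) := hy ▸ aux_alg_zpow hz r.num
  exact IsAlgebraic.of_pow r.pos this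

set_option maxRecDepth 10000

-- Case II, n=4 (labels: v=0, m=1, Bv=2, αm=3, B=4)
lemma aux_comb_II4 : ∀ f : Fin 4 → Fin 5,
    (∃ i j, i ≠ j ∧ f i = f j) ∨ (∃ i j, f i = 3 ∧ f j = 1) ∨
    (∃ i j k, f i = 2 ∧ f j = 4 ∧ f k = 0) := by decide

-- Case III, n=4 (labels: v=0, m=1, Bv=2, αm=3, α=4)
lemma aux_comb_III4 : ∀ f : Fin 4 → Fin 5,
    (∃ i j, i ≠ j ∧ f i = f j) ∨ (∃ i j, f i = 2 ∧ f j = 0) ∨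
    (∃ i j k, f i = 3 ∧ f j = 4 ∧ f k = 1) := by decide

-- Case II, first n=3 app, family ![v,m,αm], labels v=0,m=1,αm=2,B=3
lemma aux_comb_II3a : ∀ f : Fin 3 → Fin 4,
    (∃ i j, i ≠ j ∧ f i = f j) ∨ (∃ i j, f i = 2 ∧ f j = 1) ∨
    (∃ i j k, f i = 1 ∧ f j = 0 ∧ f k = 3) ∨ (∃ i j k, f i = 2 ∧ f j = 0 ∧ f k = 3) := by
  decide

-- Case II, second n=3 app, family ![v,m,Bv], labels v=0,m=1,Bv=2,B=3
lemma aux_comb_II3b : ∀ f : Fin 3 → Fin 4,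
    (∃ i j, i ≠ j ∧ f i = f j) ∨ (∃ i j, f i = 1 ∧ f j = 0) ∨
    (∃ i j k, f i = 2 ∧ f j = 3 ∧ f k = 0) ∨ (∃ i j k, f i = 2 ∧ f j = 3 ∧ f k = 1) := by
  decide

-- Case III, first n=3 app, family ![v,m,Bv], labels v=0,m=1,Bv=2,α=3
lemma aux_comb_III3a : ∀ f : Fin 3 → Fin 4,
    (∃ i j, i ≠ j ∧ f i = f j) ∨ (∃ i j, f i = 2 ∧ f j = 0) ∨
    (∃ i j k, f i = 0 ∧ f j = 1 ∧ f k = 3) ∨ (∃ i j k, f i = 2 ∧ f j = 1 ∧ f k = 3) := by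
  decide

-- Case III, second n=3 app, family ![v,m,αm], labels v=0,m=1,αm=2,α=3
lemma aux_comb_III3b : ∀ f : Fin 3 → Fin 4,
    (∃ i j, i ≠ j ∧ f i = f j) ∨ (∃ i j, f i = 0 ∧ f j = 1) ∨
    (∃ i j k, f i = 2 ∧ f j = 3 ∧ f k = 1) ∨ (∃ i j k, f i = 2 ∧ f j = 3 ∧ f k = 0) := by
  decide

lemma aux_ne_of_labels {n k : ℕ} {f : Fin n → Fin k} {i j : Fin n} {a b : Fin k}
    (ha : f i = a) (hb : f j = b) (hab : a ≠ b) : j ≠ i :=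
  fun h => hab (by rw [← ha, ← hb, h])



lemma aux_li_pair {x c : ℂ} (hx : x ≠ 0) (hc : ¬∃ q : ℚ, c = (q : ℂ)) :
    LinearIndependent ℚ ![x, c * x] := by
  rw [Fintype.linearIndependent_iff]
  intro f hf
  rw [Fin.sum_univ_two] at hf
  simp only [Matrix.cons_val_zero, Matrix.cons_val_one, Matrix.head_cons, Rat.smul_def] at hf
  have h1 : ((f 0 : ℂ) + (f 1 : ℂ) * c) * x = 0 := by ring_nf; ring_nf at hf; linear_combination hf
  have h2 : (f 0 : ℂ) + (f 1 : ℂ) * c = 0 := (mul_eq_zero.mp h1).resolve_right hx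
  have hf1 : f 1 = 0 := by
    by_contra h3
    have h3' : (f 1 : ℂ) ≠ 0 := by exact_mod_cast h3
    exact hc ⟨-f 0 / f 1, by push_cast; field_simp; linear_combination h2⟩
  have hf0 : f 0 = 0 := by
    have : (f 0 : ℂ) = 0 := by rw [hf1] at h2; simpa using h2
    exact_mod_cast this
  intro i; fin_cases i <;> assumption

lemma aux_li3 {a b c : ℂ}
    (h : ∀ p q r : ℚ, (p : ℂ) * a + (q : ℂ) * b + (r : ℂ) * c = 0 → p = 0 ∧ q = 0 ∧ r = 0) :
    LinearIndependent ℚ ![a, b, c] := by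
  rw [Fintype.linearIndependent_iff]
  intro f hf
  rw [Fin.sum_univ_three] at hf
  simp only [Matrix.cons_val_zero, Matrix.cons_val_one, Matrix.head_cons, Rat.smul_def,
    Matrix.cons_val_two, Matrix.tail_cons] at hf
  obtain ⟨h0, h1, h2⟩ := h (f 0) (f 1) (f 2) hf
  intro i; fin_cases i <;> assumption

lemma aux_dep4 {a b c d : ℂ} (h : ¬ LinearIndependent ℚ ![a, b, c, d]) :
    ∃ p q r s : ℚ, (p : ℂ) * a + (q : ℂ) * b + (r : ℂ) * c + (s : ℂ) * d = 0 ∧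
      ¬(p = 0 ∧ q = 0 ∧ r = 0 ∧ s = 0) := by
  rw [Fintype.not_linearIndependent_iff] at h
  obtain ⟨f, hsum, i, hi⟩ := h
  refine ⟨f 0, f 1, f 2, f 3, ?_, ?_⟩
  · rw [Fin.sum_univ_four] at hsum
    simpa [Rat.smul_def] using hsum
  · rintro ⟨h0, h1, h2, h3⟩
    fin_cases i <;> simp_all
lemma aux_dep3 {a b c : ℂ} (h : ¬ LinearIndependent ℚ ![a, b, c]) :
    ∃ p q r : ℚ, (p : ℂ) * a + (q : ℂ) * b + (r : ℂ) * c = 0 ∧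
      ¬(p = 0 ∧ q = 0 ∧ r = 0) := by
  rw [Fintype.not_linearIndependent_iff] at h
  obtain ⟨f, hsum, i, hi⟩ := h
  refine ⟨f 0, f 1, f 2, ?_, ?_⟩
  · rw [Fin.sum_univ_three] at hsum
    simpa [Rat.smul_def] using hsum
  · rintro ⟨h0, h1, h2⟩
    fin_cases i <;> simp_all

lemma aux_GS (hS : SchanuelConjecture) {x c : ℂ} (hx : x ≠ 0) (hc : ¬∃ q : ℚ, c = (q : ℂ))
    (hcalg : IsAlgebraic ℚ c) (h1 : IsAlgebraic ℚ (Complex.exp x))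
    (h2 : IsAlgebraic ℚ (Complex.exp (c * x))) : False := by
  obtain ⟨g, hmemg, hind⟩ := hS 2 ![x, c * x] (aux_li_pair hx hc)
  have hvals : ∀ i, g i = x ∨ g i = c * x := by
    intro i
    have htr := hind.transcendental i
    have h := hmemg i
    simp only [Set.mem_union, Set.mem_range] at h
    rcases h with ⟨j, hj⟩ | ⟨j, hj⟩
    · fin_cases j <;> simp at hj <;> tauto
    · exfalso; fin_cases j <;> simp at hj
      · exact htr (hj ▸ h1)
      · exact htr (hj ▸ h2)
  rcases hvals 0 with h0 | h0 <;> rcases hvals 1 with h1' | h1'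
  · exact aux_kill_dup hind (by decide : (1 : Fin 2) ≠ 0) (h0.trans h1'.symm)
  · exact aux_kill_pair hind 1 0 (by decide) hcalg (by rw [h0, h1'])
  · exact aux_kill_pair hind 0 1 (by decide) hcalg (by rw [h0, h1'])
  · exact aux_kill_dup hind (by decide : (1 : Fin 2) ≠ 0) (h0.trans h1'.symm)

set_option maxHeartbeats 1000000 in
lemma aux_schII4 (hS : SchanuelConjecture) {α B v m : ℂ}
    (hv : Complex.exp v = α) (hm : Complex.exp m = B)
    (hAalg : IsAlgebraic ℚ α) (hA1 : IsAlgebraic ℚ (Complex.exp (B * v)))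
    (hA2 : IsAlgebraic ℚ (Complex.exp (α * m)))
    (hLI : LinearIndependent ℚ ![v, m, B * v, α * m]) : False := by
  classical
  obtain ⟨g, hmemg, hind⟩ := hS 4 ![v, m, B * v, α * m] hLI
  have hvals : ∀ i, g i = v ∨ g i = m ∨ g i = B * v ∨ g i = α * m ∨ g i = B := by
    intro i
    have htr := hind.transcendental i
    have h := hmemg i
    simp only [Set.mem_union, Set.mem_range] at h
    rcases h with ⟨j, hj⟩ | ⟨j, hj⟩
    · fin_cases j <;> simp at hj <;> tauto
    · fin_cases j <;> simp at hj
      · exact absurd (hj ▸ hv ▸ hAalg) htr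
      · rw [hm] at hj; tauto
      · exact absurd (hj ▸ hA1) htr
      · exact absurd (hj ▸ hA2) htr
  set V : Fin 5 → ℂ := ![v, m, B * v, α * m, B] with hVdef
  set f : Fin 4 → Fin 5 := fun i =>
    if g i = v then 0 else if g i = m then 1 else if g i = B * v then 2
    else if g i = α * m then 3 else 4 with hfdef
  have hf : ∀ i, g i = V (f i) := by
    intro i
    simp only [hfdef]
    split_ifs with hc1 hc2 hc3 hc4
    · simpa [hVdef] using hc1
    · simpa [hVdef] using hc2
    · simpa [hVdef] using hc3
    · simpa [hVdef] using hc4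
    · have := hvals i
      show g i = ![v, m, B * v, α * m, B] 4
      simp only [Matrix.cons_val_four, Matrix.cons_val_fin_one]
      tauto
  rcases aux_comb_II4 f with ⟨i, j, hij, he⟩ | ⟨i, j, hi, hj⟩ | ⟨i, j, k, hi, hj, hk⟩
  · exact aux_kill_dup hind (Ne.symm hij) (by rw [hf i, hf j, he])
  · exact aux_kill_pair hind i j (aux_ne_of_labels hi hj (by decide)) hAalg
      (by rw [hf i, hf j, hi, hj]; simp [hVdef])
  · exact aux_kill_prod hind i j k (aux_ne_of_labels hi hj (by decide))
      (aux_ne_of_labels hi hk (by decide)) isAlgebraic_one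
      (by rw [hf i, hf j, hf k, hi, hj, hk]; simp [hVdef])

set_option maxHeartbeats 1000000 in
lemma aux_schIII4 (hS : SchanuelConjecture) {α B v m : ℂ}
    (hv : Complex.exp v = α) (hm : Complex.exp m = B)
    (hBalg : IsAlgebraic ℚ B) (hA1 : IsAlgebraic ℚ (Complex.exp (B * v)))
    (hA2 : IsAlgebraic ℚ (Complex.exp (α * m)))
    (hLI : LinearIndependent ℚ ![v, m, B * v, α * m]) : False := by
  classical
  obtain ⟨g, hmemg, hind⟩ := hS 4 ![v, m, B * v, α * m] hLI
  have hvals : ∀ i, g i = v ∨ g i = m ∨ g i = B * v ∨ g i = α * m ∨ g i = α := by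
    intro i
    have htr := hind.transcendental i
    have h := hmemg i
    simp only [Set.mem_union, Set.mem_range] at h
    rcases h with ⟨j, hj⟩ | ⟨j, hj⟩
    · fin_cases j <;> simp at hj <;> tauto
    · fin_cases j <;> simp at hj
      · rw [hv] at hj; tauto
      · exact absurd (hj ▸ hm ▸ hBalg) htr
      · exact absurd (hj ▸ hA1) htr
      · exact absurd (hj ▸ hA2) htr
  set V : Fin 5 → ℂ := ![v, m, B * v, α * m, α] with hVdef
  set f : Fin 4 → Fin 5 := fun i =>
    if g i = v then 0 else if g i = m then 1 else if g i = B * v then 2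
    else if g i = α * m then 3 else 4 with hfdef
  have hf : ∀ i, g i = V (f i) := by
    intro i
    simp only [hfdef]
    split_ifs with hc1 hc2 hc3 hc4
    · simpa [hVdef] using hc1
    · simpa [hVdef] using hc2
    · simpa [hVdef] using hc3
    · simpa [hVdef] using hc4
    · have := hvals i
      show g i = α
      tauto
  rcases aux_comb_III4 f with ⟨i, j, hij, he⟩ | ⟨i, j, hi, hj⟩ | ⟨i, j, k, hi, hj, hk⟩
  · exact aux_kill_dup hind (Ne.symm hij) (by rw [hf i, hf j, he])
  · exact aux_kill_pair hind i j (aux_ne_of_labels hi hj (by decide)) hBalg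
      (by rw [hf i, hf j, hi, hj]; simp [hVdef])
  · exact aux_kill_prod hind i j k (aux_ne_of_labels hi hj (by decide))
      (aux_ne_of_labels hi hk (by decide)) isAlgebraic_one
      (by rw [hf i, hf j, hf k, hi, hj, hk]; simp [hVdef])

section Sch3
variable (hS : SchanuelConjecture) {α B v m : ℂ}
include hS

set_option maxHeartbeats 1000000 in
lemma aux_schII3a (hv : Complex.exp v = α) (hm : Complex.exp m = B)
    (hAalg : IsAlgebraic ℚ α) (hA2 : IsAlgebraic ℚ (Complex.exp (α * m)))
    {c₁ c₂ d₁ d₂ : ℂ} (hc₁ : IsAlgebraic ℚ c₁) (hc₂ : IsAlgebraic ℚ c₂)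
    (hd₁ : IsAlgebraic ℚ d₁) (hd₂ : IsAlgebraic ℚ d₂)
    (eqm : m = c₁ * v + c₂ * (B * v)) (eqam : α * m = d₁ * v + d₂ * (B * v))
    (hLI : LinearIndependent ℚ ![v, m, α * m]) : False := by
  classical
  obtain ⟨g, hmemg, hind⟩ := hS 3 ![v, m, α * m] hLI
  have hvals : ∀ i, g i = v ∨ g i = m ∨ g i = α * m ∨ g i = B := by
    intro i
    have htr := hind.transcendental i
    have h := hmemg i
    simp only [Set.mem_union, Set.mem_range] at h
    rcases h with ⟨j, hj⟩ | ⟨j, hj⟩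
    · fin_cases j <;> simp at hj <;> tauto
    · fin_cases j <;> simp at hj
      · exact absurd (hj ▸ hv ▸ hAalg) htr
      · rw [hm] at hj; tauto
      · exact absurd (hj ▸ hA2) htr
  set V : Fin 4 → ℂ := ![v, m, α * m, B] with hVdef
  set f : Fin 3 → Fin 4 := fun i =>
    if g i = v then 0 else if g i = m then 1 else if g i = α * m then 2 else 3 with hfdef
  have hf : ∀ i, g i = V (f i) := by
    intro i
    simp only [hfdef]
    split_ifs with hc1 hc2 hc3
    · simpa [hVdef] using hc1
    · simpa [hVdef] using hc2
    · simpa [hVdef] using hc3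
    · have := hvals i
      show g i = B
      tauto
  rcases aux_comb_II3a f with ⟨i, j, hij, he⟩ | ⟨i, j, hi, hj⟩ |
    ⟨i, j, k, hi, hj, hk⟩ | ⟨i, j, k, hi, hj, hk⟩
  · exact aux_kill_dup hind (Ne.symm hij) (by rw [hf i, hf j, he])
  · exact aux_kill_pair hind i j (aux_ne_of_labels hi hj (by decide)) hAalg
      (by rw [hf i, hf j, hi, hj]; simp [hVdef])
  · exact aux_kill_two hind i j k j (aux_ne_of_labels hi hj (by decide))
      (aux_ne_of_labels hi hk (by decide)) (aux_ne_of_labels hi hj (by decide)) hc₁ hc₂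
      (by rw [hf i, hf j, hf k, hi, hj, hk]; simpa [hVdef] using eqm)
  · exact aux_kill_two hind i j k j (aux_ne_of_labels hi hj (by decide))
      (aux_ne_of_labels hi hk (by decide)) (aux_ne_of_labels hi hj (by decide)) hd₁ hd₂
      (by rw [hf i, hf j, hf k, hi, hj, hk]; simpa [hVdef] using eqam)

set_option maxHeartbeats 1000000 in
lemma aux_schII3b (hv : Complex.exp v = α) (hm : Complex.exp m = B)
    (hAalg : IsAlgebraic ℚ α) (hA1 : IsAlgebraic ℚ (Complex.exp (B * v)))
    {c' c₂ : ℂ} (hc' : IsAlgebraic ℚ c') (hc₂ : IsAlgebraic ℚ c₂)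
    (eqc : m = c' * v) (eqbv : B * v = c₂ * (B * m))
    (hLI : LinearIndependent ℚ ![v, m, B * v]) : False := by
  classical
  obtain ⟨g, hmemg, hind⟩ := hS 3 ![v, m, B * v] hLI
  have hvals : ∀ i, g i = v ∨ g i = m ∨ g i = B * v ∨ g i = B := by
    intro i
    have htr := hind.transcendental i
    have h := hmemg i
    simp only [Set.mem_union, Set.mem_range] at h
    rcases h with ⟨j, hj⟩ | ⟨j, hj⟩
    · fin_cases j <;> simp at hj <;> tauto
    · fin_cases j <;> simp at hj
      · exact absurd (hj ▸ hv ▸ hAalg) htr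
      · rw [hm] at hj; tauto
      · exact absurd (hj ▸ hA1) htr
  set V : Fin 4 → ℂ := ![v, m, B * v, B] with hVdef
  set f : Fin 3 → Fin 4 := fun i =>
    if g i = v then 0 else if g i = m then 1 else if g i = B * v then 2 else 3 with hfdef
  have hf : ∀ i, g i = V (f i) := by
    intro i
    simp only [hfdef]
    split_ifs with hc1 hc2 hc3
    · simpa [hVdef] using hc1
    · simpa [hVdef] using hc2
    · simpa [hVdef] using hc3
    · have := hvals i
      show g i = B
      tauto
  rcases aux_comb_II3b f with ⟨i, j, hij, he⟩ | ⟨i, j, hi, hj⟩ |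
    ⟨i, j, k, hi, hj, hk⟩ | ⟨i, j, k, hi, hj, hk⟩
  · exact aux_kill_dup hind (Ne.symm hij) (by rw [hf i, hf j, he])
  · exact aux_kill_pair hind i j (aux_ne_of_labels hi hj (by decide)) hc'
      (by rw [hf i, hf j, hi, hj]; simpa [hVdef] using eqc)
  · exact aux_kill_prod hind i j k (aux_ne_of_labels hi hj (by decide))
      (aux_ne_of_labels hi hk (by decide)) isAlgebraic_one
      (by rw [hf i, hf j, hf k, hi, hj, hk]; simp [hVdef])
  · exact aux_kill_prod hind i j k (aux_ne_of_labels hi hj (by decide))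
      (aux_ne_of_labels hi hk (by decide)) hc₂
      (by rw [hf i, hf j, hf k, hi, hj, hk]; simpa [hVdef] using eqbv)

set_option maxHeartbeats 1000000 in
lemma aux_schIII3a (hv : Complex.exp v = α) (hm : Complex.exp m = B)
    (hBalg : IsAlgebraic ℚ B) (hA1 : IsAlgebraic ℚ (Complex.exp (B * v)))
    {c₁ c₂ d₁ d₂ : ℂ} (hc₁ : IsAlgebraic ℚ c₁) (hc₂ : IsAlgebraic ℚ c₂)
    (hd₁ : IsAlgebraic ℚ d₁) (hd₂ : IsAlgebraic ℚ d₂)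
    (eqv : v = c₁ * m + c₂ * (α * m)) (eqbv : B * v = d₁ * m + d₂ * (α * m))
    (hLI : LinearIndependent ℚ ![v, m, B * v]) : False := by
  classical
  obtain ⟨g, hmemg, hind⟩ := hS 3 ![v, m, B * v] hLI
  have hvals : ∀ i, g i = v ∨ g i = m ∨ g i = B * v ∨ g i = α := by
    intro i
    have htr := hind.transcendental i
    have h := hmemg i
    simp only [Set.mem_union, Set.mem_range] at h
    rcases h with ⟨j, hj⟩ | ⟨j, hj⟩
    · fin_cases j <;> simp at hj <;> tauto
    · fin_cases j <;> simp at hj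
      · rw [hv] at hj; tauto
      · exact absurd (hj ▸ hm ▸ hBalg) htr
      · exact absurd (hj ▸ hA1) htr
  set V : Fin 4 → ℂ := ![v, m, B * v, α] with hVdef
  set f : Fin 3 → Fin 4 := fun i =>
    if g i = v then 0 else if g i = m then 1 else if g i = B * v then 2 else 3 with hfdef
  have hf : ∀ i, g i = V (f i) := by
    intro i
    simp only [hfdef]
    split_ifs with hc1 hc2 hc3
    · simpa [hVdef] using hc1
    · simpa [hVdef] using hc2
    · simpa [hVdef] using hc3
    · have := hvals i
      show g i = α
      tauto
  rcases aux_comb_III3a f with ⟨i, j, hij, he⟩ | ⟨i, j, hi, hj⟩ |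
    ⟨i, j, k, hi, hj, hk⟩ | ⟨i, j, k, hi, hj, hk⟩
  · exact aux_kill_dup hind (Ne.symm hij) (by rw [hf i, hf j, he])
  · exact aux_kill_pair hind i j (aux_ne_of_labels hi hj (by decide)) hBalg
      (by rw [hf i, hf j, hi, hj]; simp [hVdef])
  · exact aux_kill_two hind i j k j (aux_ne_of_labels hi hj (by decide))
      (aux_ne_of_labels hi hk (by decide)) (aux_ne_of_labels hi hj (by decide)) hc₁ hc₂
      (by rw [hf i, hf j, hf k, hi, hj, hk]; simpa [hVdef] using eqv)
  · exact aux_kill_two hind i j k j (aux_ne_of_labels hi hj (by decide))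
      (aux_ne_of_labels hi hk (by decide)) (aux_ne_of_labels hi hj (by decide)) hd₁ hd₂
      (by rw [hf i, hf j, hf k, hi, hj, hk]; simpa [hVdef] using eqbv)

set_option maxHeartbeats 1000000 in
lemma aux_schIII3b (hv : Complex.exp v = α) (hm : Complex.exp m = B)
    (hBalg : IsAlgebraic ℚ B) (hA2 : IsAlgebraic ℚ (Complex.exp (α * m)))
    {c'' c₂ : ℂ} (hc'' : IsAlgebraic ℚ c'') (hc₂ : IsAlgebraic ℚ c₂)
    (eqc : v = c'' * m) (eqam : α * m = c₂ * (α * v))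
    (hLI : LinearIndependent ℚ ![v, m, α * m]) : False := by
  classical
  obtain ⟨g, hmemg, hind⟩ := hS 3 ![v, m, α * m] hLI
  have hvals : ∀ i, g i = v ∨ g i = m ∨ g i = α * m ∨ g i = α := by
    intro i
    have htr := hind.transcendental i
    have h := hmemg i
    simp only [Set.mem_union, Set.mem_range] at h
    rcases h with ⟨j, hj⟩ | ⟨j, hj⟩
    · fin_cases j <;> simp at hj <;> tauto
    · fin_cases j <;> simp at hj
      · rw [hv] at hj; tauto
      · exact absurd (hj ▸ hm ▸ hBalg) htr
      · exact absurd (hj ▸ hA2) htr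
  set V : Fin 4 → ℂ := ![v, m, α * m, α] with hVdef
  set f : Fin 3 → Fin 4 := fun i =>
    if g i = v then 0 else if g i = m then 1 else if g i = α * m then 2 else 3 with hfdef
  have hf : ∀ i, g i = V (f i) := by
    intro i
    simp only [hfdef]
    split_ifs with hc1 hc2 hc3
    · simpa [hVdef] using hc1
    · simpa [hVdef] using hc2
    · simpa [hVdef] using hc3
    · have := hvals i
      show g i = α
      tauto
  rcases aux_comb_III3b f with ⟨i, j, hij, he⟩ | ⟨i, j, hi, hj⟩ |
    ⟨i, j, k, hi, hj, hk⟩ | ⟨i, j, k, hi, hj, hk⟩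
  · exact aux_kill_dup hind (Ne.symm hij) (by rw [hf i, hf j, he])
  · exact aux_kill_pair hind i j (aux_ne_of_labels hi hj (by decide)) hc''
      (by rw [hf i, hf j, hi, hj]; simpa [hVdef] using eqc)
  · exact aux_kill_prod hind i j k (aux_ne_of_labels hi hj (by decide))
      (aux_ne_of_labels hi hk (by decide)) isAlgebraic_one
      (by rw [hf i, hf j, hf k, hi, hj, hk]; simp [hVdef])
  · exact aux_kill_prod hind i j k (aux_ne_of_labels hi hj (by decide))
      (aux_ne_of_labels hi hk (by decide)) hc₂
      (by rw [hf i, hf j, hf k, hi, hj, hk]; simpa [hVdef] using eqam)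

end Sch3

set_option maxHeartbeats 1000000 in
/-- Assuming Schanuel's conjecture: with powers via fixed logarithms
(`exp l = β`, `β^γ = exp (γ·l)`, `exp m = β^γ`, `(β^γ)^α = exp (α·m)`,
`exp v = α`, `α^{β^γ} = exp (β^γ·v)`), if `α, β, γ ≠ 0`, `α ≠ 1`, `β^γ ≠ 1`,
at least one of `α, β^γ` is irrational, at least one is algebraic, and
`(β^γ)^α` is algebraic, then `α^{β^γ}` is transcendental. -/
theorem alpha_pow_beta_gamma_transcendental (hS : SchanuelConjecture)
    (α β γ l m v : ℂ)
    (hα : α ≠ 0) (hβ : β ≠ 0) (hγ : γ ≠ 0) (hα1 : α ≠ 1)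
    (hl : Complex.exp l = β)
    (hm : Complex.exp m = Complex.exp (γ * l))
    (hv : Complex.exp v = α)
    (hbg1 : Complex.exp (γ * l) ≠ 1)
    (hirr : (¬∃ q : ℚ, α = (q : ℂ)) ∨ (¬∃ q : ℚ, Complex.exp (γ * l) = (q : ℂ)))
    (halg : IsAlgebraic ℚ α ∨ IsAlgebraic ℚ (Complex.exp (γ * l)))
    (hpow : IsAlgebraic ℚ (Complex.exp (α * m))) :
    Transcendental ℚ (Complex.exp (Complex.exp (γ * l) * v)) := by
  intro hA1
  set B : ℂ := Complex.exp (γ * l) with hBdef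
  have hB0 : B ≠ 0 := Complex.exp_ne_zero _
  have hv0 : v ≠ 0 := fun h => hα1 (by rw [← hv, h, Complex.exp_zero])
  have hm0 : m ≠ 0 := fun h => hbg1 (by rw [← hm, h, Complex.exp_zero])
  by_cases hAalg : IsAlgebraic ℚ α <;> by_cases hBalg : IsAlgebraic ℚ B
  -- Case I : both algebraic
  · rcases hirr with hirrA | hirrB
    · exact aux_GS hS hm0 hirrA hAalg (hm ▸ hBalg) hpow
    · exact aux_GS hS hv0 hirrB hBalg (hv ▸ hAalg) hA1
  -- Case II : α algebraic, B transcendental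
  · have hRB : ¬∃ r : ℚ, α = (r : ℂ) := by
      rintro ⟨r, hr⟩
      have hr0 : r ≠ 0 := by rintro rfl; exact hα (by simpa using hr)
      apply hBalg
      refine aux_pow_alg (x := α * m) (z := Complex.exp (α * m)) r⁻¹ (inv_ne_zero hr0) rfl ?_ hpow
      have hrc : (r : ℂ) ≠ 0 := by exact_mod_cast hr0
      rw [← hm]; congr 1; rw [hr]; push_cast; field_simp
    by_cases hLI4 : LinearIndependent ℚ ![v, m, B * v, α * m]
    · exact aux_schII4 hS hv hm hAalg hA1 hpow hLI4
    obtain ⟨a, b, c, d, hrel, hne⟩ := aux_dep4 hLI4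
    obtain ⟨q, hqdef⟩ : ∃ q : ℂ, q = (b : ℂ) + (d : ℂ) * α := ⟨_, rfl⟩
    have hqalg : IsAlgebraic ℚ q := by
      rw [hqdef]; exact aux_alg_add (aux_alg_rat b) (aux_alg_mul (aux_alg_rat d) hAalg)
    by_cases hq : q = 0
    · have hz : (b : ℂ) + (d : ℂ) * α = 0 := by rw [← hqdef]; exact hq
      by_cases hd : d = 0
      · have hd' : (d : ℂ) = 0 := by exact_mod_cast hd
        have hb' : (b : ℂ) = 0 := by linear_combination hz - α * hd'
        have h5 : ((a : ℂ) + (c : ℂ) * B) * v = 0 := by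
          linear_combination hrel - m * hb' - (α * m) * hd'
        have h6 : (a : ℂ) + (c : ℂ) * B = 0 := (mul_eq_zero.mp h5).resolve_right hv0
        by_cases hcq : c = 0
        · have hc' : (c : ℂ) = 0 := by exact_mod_cast hcq
          have ha' : (a : ℂ) = 0 := by linear_combination h6 - B * hc'
          exact hne ⟨by exact_mod_cast ha', by exact_mod_cast hb', hcq, hd⟩
        · apply hBalg
          have hc' : (c : ℂ) ≠ 0 := by exact_mod_cast hcq
          have hBr : B = ((-a / c : ℚ) : ℂ) := by push_cast; field_simp; linear_combination h6
          rw [hBr]; exact aux_alg_rat _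
      · apply hRB
        have hd' : (d : ℂ) ≠ 0 := by exact_mod_cast hd
        exact ⟨-b / d, by push_cast; field_simp; linear_combination hz⟩
    · have hrel2 : q * m = -((a : ℂ) * v + (c : ℂ) * (B * v)) := by
        linear_combination hrel + m * hqdef
      have eqm : m = (-(a : ℂ) / q) * v + (-(c : ℂ) / q) * (B * v) := by
        field_simp
        linear_combination hrel2
      have eqam : α * m = (-((a : ℂ) * α) / q) * v + (-((c : ℂ) * α) / q) * (B * v) := by
        field_simp
        linear_combination hrel2
      have hc₁ := aux_alg_div (aux_alg_neg (aux_alg_rat a)) hqalg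
      have hc₂ := aux_alg_div (aux_alg_neg (aux_alg_rat c)) hqalg
      have hd₁ := aux_alg_div (aux_alg_neg (aux_alg_mul (aux_alg_rat a) hAalg)) hqalg
      have hd₂ := aux_alg_div (aux_alg_neg (aux_alg_mul (aux_alg_rat c) hAalg)) hqalg
      by_cases hLI3 : LinearIndependent ℚ ![v, m, α * m]
      · exact aux_schII3a hS hv hm hAalg hpow hc₁ hc₂ hd₁ hd₂ eqm eqam hLI3
      · obtain ⟨e, f2, h2, hrel3, hne3⟩ := aux_dep3 hLI3
        obtain ⟨q', hq'def⟩ : ∃ x : ℂ, x = (f2 : ℂ) + (h2 : ℂ) * α := ⟨_, rfl⟩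
        by_cases hq'0 : q' = 0
        · have hz : (f2 : ℂ) + (h2 : ℂ) * α = 0 := by rw [← hq'def]; exact hq'0
          by_cases hh : h2 = 0
          · have hh' : (h2 : ℂ) = 0 := by exact_mod_cast hh
            have hf2' : (f2 : ℂ) = 0 := by linear_combination hz - α * hh'
            have h5 : (e : ℂ) * v = 0 := by
              linear_combination hrel3 - m * hf2' - (α * m) * hh'
            have he' : (e : ℂ) = 0 := (mul_eq_zero.mp h5).resolve_right hv0
            exact hne3 ⟨by exact_mod_cast he', by exact_mod_cast hf2', hh⟩
          · apply hRB
            have hh' : (h2 : ℂ) ≠ 0 := by exact_mod_cast hh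
            exact ⟨-f2 / h2, by push_cast; field_simp; linear_combination hz⟩
        · have hq'alg : IsAlgebraic ℚ q' := by
            rw [hq'def]; exact aux_alg_add (aux_alg_rat f2) (aux_alg_mul (aux_alg_rat h2) hAalg)
          obtain ⟨c', hc'def⟩ : ∃ x : ℂ, x = -(e : ℂ) / q' := ⟨_, rfl⟩
          have eqc : m = c' * v := by
            have hz : q' * m = -((e : ℂ) * v) := by linear_combination hrel3 + m * hq'def
            rw [hc'def]
            field_simp
            linear_combination hz
          have hc'alg : IsAlgebraic ℚ c' := by
            rw [hc'def]; exact aux_alg_div (aux_alg_neg (aux_alg_rat e)) hq'alg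
          have hc'0 : c' ≠ 0 := fun h0 => hm0 (by rw [eqc, h0, zero_mul])
          by_cases hcr : ∃ r : ℚ, c' = (r : ℂ)
          · obtain ⟨r, hrr⟩ := hcr
            have hr0 : r ≠ 0 := fun h0 => hc'0 (by rw [hrr, h0]; simp)
            apply hBalg
            exact aux_pow_alg (x := v) r hr0 hv (by rw [← hm]; congr 1; rw [eqc, hrr]) hAalg
          · have hLIb : LinearIndependent ℚ ![v, m, B * v] := by
              apply aux_li3
              intro p1 p2 p3 hsum
              have h7 : ((p1 : ℂ) + (p2 : ℂ) * c' + (p3 : ℂ) * B) * v = 0 := by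
                linear_combination hsum - (p2 : ℂ) * eqc
              have h8 : (p1 : ℂ) + (p2 : ℂ) * c' + (p3 : ℂ) * B = 0 :=
                (mul_eq_zero.mp h7).resolve_right hv0
              by_cases hp3 : p3 = 0
              · have hp3' : (p3 : ℂ) = 0 := by exact_mod_cast hp3
                by_cases hp2 : p2 = 0
                · have hp2' : (p2 : ℂ) = 0 := by exact_mod_cast hp2
                  have hp1' : (p1 : ℂ) = 0 := by linear_combination h8 - c' * hp2' - B * hp3'
                  exact ⟨by exact_mod_cast hp1', hp2, hp3⟩
                · exfalso
                  apply hcr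
                  have hp2' : (p2 : ℂ) ≠ 0 := by exact_mod_cast hp2
                  exact ⟨-p1 / p2, by push_cast; field_simp; linear_combination h8 - B * hp3'⟩
              · exfalso
                apply hBalg
                have hp3' : (p3 : ℂ) ≠ 0 := by exact_mod_cast hp3
                have hBeq : B = (-(p1 : ℂ) - (p2 : ℂ) * c') / (p3 : ℂ) := by
                  field_simp
                  linear_combination h8
                rw [hBeq]
                exact aux_alg_div
                  (aux_alg_add (aux_alg_neg (aux_alg_rat p1))
                    (aux_alg_neg (aux_alg_mul (aux_alg_rat p2) hc'alg)))
                  (aux_alg_rat p3)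
            have eqbv : B * v = c'⁻¹ * (B * m) := by
              rw [eqc]
              field_simp
            exact aux_schII3b hS hv hm hAalg hA1 hc'alg (aux_alg_inv hc'alg) eqc eqbv hLIb
  -- Case III : B algebraic, α transcendental
  · have hRA : ¬∃ r : ℚ, B = (r : ℂ) := by
      rintro ⟨r, hr⟩
      have hr0 : r ≠ 0 := by rintro rfl; exact hB0 (by simpa using hr)
      apply hAalg
      refine aux_pow_alg (x := B * v) (z := Complex.exp (B * v)) r⁻¹ (inv_ne_zero hr0) rfl ?_ hA1
      have hrc : (r : ℂ) ≠ 0 := by exact_mod_cast hr0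
      rw [← hv]; congr 1; rw [hr]; push_cast; field_simp
    by_cases hLI4 : LinearIndependent ℚ ![v, m, B * v, α * m]
    · exact aux_schIII4 hS hv hm hBalg hA1 hpow hLI4
    obtain ⟨a, b, c, d, hrel, hne⟩ := aux_dep4 hLI4
    obtain ⟨p, hpdef⟩ : ∃ x : ℂ, x = (a : ℂ) + (c : ℂ) * B := ⟨_, rfl⟩
    have hpalg : IsAlgebraic ℚ p := by
      rw [hpdef]; exact aux_alg_add (aux_alg_rat a) (aux_alg_mul (aux_alg_rat c) hBalg)
    by_cases hp : p = 0
    · have hz : (a : ℂ) + (c : ℂ) * B = 0 := by rw [← hpdef]; exact hp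
      by_cases hcq : c = 0
      · have hc' : (c : ℂ) = 0 := by exact_mod_cast hcq
        have ha' : (a : ℂ) = 0 := by linear_combination hz - B * hc'
        have h5 : ((b : ℂ) + (d : ℂ) * α) * m = 0 := by
          linear_combination hrel - v * ha' - (B * v) * hc'
        have h6 : (b : ℂ) + (d : ℂ) * α = 0 := (mul_eq_zero.mp h5).resolve_right hm0
        by_cases hd : d = 0
        · have hd' : (d : ℂ) = 0 := by exact_mod_cast hd
          have hb' : (b : ℂ) = 0 := by linear_combination h6 - α * hd'
          exact hne ⟨by exact_mod_cast ha', by exact_mod_cast hb', hcq, hd⟩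
        · apply hAalg
          have hd' : (d : ℂ) ≠ 0 := by exact_mod_cast hd
          have hAr : α = ((-b / d : ℚ) : ℂ) := by push_cast; field_simp; linear_combination h6
          rw [hAr]; exact aux_alg_rat _
      · apply hRA
        have hc' : (c : ℂ) ≠ 0 := by exact_mod_cast hcq
        exact ⟨-a / c, by push_cast; field_simp; linear_combination hz⟩
    · have hrel2 : p * v = -((b : ℂ) * m + (d : ℂ) * (α * m)) := by
        linear_combination hrel + v * hpdef
      have eqv : v = (-(b : ℂ) / p) * m + (-(d : ℂ) / p) * (α * m) := by
        field_simp
        linear_combination hrel2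
      have eqbv : B * v = (-((b : ℂ) * B) / p) * m + (-((d : ℂ) * B) / p) * (α * m) := by
        field_simp
        linear_combination hrel2
      have hc₁ := aux_alg_div (aux_alg_neg (aux_alg_rat b)) hpalg
      have hc₂ := aux_alg_div (aux_alg_neg (aux_alg_rat d)) hpalg
      have hd₁ := aux_alg_div (aux_alg_neg (aux_alg_mul (aux_alg_rat b) hBalg)) hpalg
      have hd₂ := aux_alg_div (aux_alg_neg (aux_alg_mul (aux_alg_rat d) hBalg)) hpalg
      by_cases hLI3 : LinearIndependent ℚ ![v, m, B * v]
      · exact aux_schIII3a hS hv hm hBalg hA1 hc₁ hc₂ hd₁ hd₂ eqv eqbv hLI3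
      · obtain ⟨e, f2, h2, hrel3, hne3⟩ := aux_dep3 hLI3
        obtain ⟨p', hp'def⟩ : ∃ x : ℂ, x = (e : ℂ) + (h2 : ℂ) * B := ⟨_, rfl⟩
        by_cases hp'0 : p' = 0
        · have hz : (e : ℂ) + (h2 : ℂ) * B = 0 := by rw [← hp'def]; exact hp'0
          by_cases hh : h2 = 0
          · have hh' : (h2 : ℂ) = 0 := by exact_mod_cast hh
            have he' : (e : ℂ) = 0 := by linear_combination hz - B * hh'
            have h5 : (f2 : ℂ) * m = 0 := by
              linear_combination hrel3 - v * he' - (B * v) * hh'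
            have hf2' : (f2 : ℂ) = 0 := (mul_eq_zero.mp h5).resolve_right hm0
            exact hne3 ⟨by exact_mod_cast he', by exact_mod_cast hf2', hh⟩
          · apply hRA
            have hh' : (h2 : ℂ) ≠ 0 := by exact_mod_cast hh
            exact ⟨-e / h2, by push_cast; field_simp; linear_combination hz⟩
        · have hp'alg : IsAlgebraic ℚ p' := by
            rw [hp'def]; exact aux_alg_add (aux_alg_rat e) (aux_alg_mul (aux_alg_rat h2) hBalg)
          obtain ⟨c'', hc''def⟩ : ∃ x : ℂ, x = -(f2 : ℂ) / p' := ⟨_, rfl⟩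
          have eqc : v = c'' * m := by
            have hz : p' * v = -((f2 : ℂ) * m) := by linear_combination hrel3 + v * hp'def
            rw [hc''def]
            field_simp
            linear_combination hz
          have hc''alg : IsAlgebraic ℚ c'' := by
            rw [hc''def]; exact aux_alg_div (aux_alg_neg (aux_alg_rat f2)) hp'alg
          have hc''0 : c'' ≠ 0 := fun h0 => hv0 (by rw [eqc, h0, zero_mul])
          by_cases hcr : ∃ r : ℚ, c'' = (r : ℂ)
          · obtain ⟨r, hrr⟩ := hcr
            have hr0 : r ≠ 0 := fun h0 => hc''0 (by rw [hrr, h0]; simp)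
            apply hAalg
            exact aux_pow_alg (x := m) r hr0 hm (by rw [← hv]; congr 1; rw [eqc, hrr]) hBalg
          · have hLIb : LinearIndependent ℚ ![v, m, α * m] := by
              apply aux_li3
              intro p1 p2 p3 hsum
              have h7 : ((p1 : ℂ) * c'' + (p2 : ℂ) + (p3 : ℂ) * α) * m = 0 := by
                linear_combination hsum - (p1 : ℂ) * eqc
              have h8 : (p1 : ℂ) * c'' + (p2 : ℂ) + (p3 : ℂ) * α = 0 :=
                (mul_eq_zero.mp h7).resolve_right hm0
              by_cases hp3 : p3 = 0
              · have hp3' : (p3 : ℂ) = 0 := by exact_mod_cast hp3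
                by_cases hp1 : p1 = 0
                · have hp1' : (p1 : ℂ) = 0 := by exact_mod_cast hp1
                  have hp2' : (p2 : ℂ) = 0 := by linear_combination h8 - c'' * hp1' - α * hp3'
                  exact ⟨hp1, by exact_mod_cast hp2', hp3⟩
                · exfalso
                  apply hcr
                  have hp1' : (p1 : ℂ) ≠ 0 := by exact_mod_cast hp1
                  exact ⟨-p2 / p1, by push_cast; field_simp; linear_combination h8 - α * hp3'⟩
              · exfalso
                apply hAalg
                have hp3' : (p3 : ℂ) ≠ 0 := by exact_mod_cast hp3
                have hAeq : α = (-((p1 : ℂ) * c'') - (p2 : ℂ)) / (p3 : ℂ) := by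
                  field_simp
                  linear_combination h8
                rw [hAeq]
                exact aux_alg_div
                  (aux_alg_add (aux_alg_neg (aux_alg_mul (aux_alg_rat p1) hc''alg))
                    (aux_alg_neg (aux_alg_rat p2)))
                  (aux_alg_rat p3)
            have eqam : α * m = c''⁻¹ * (α * v) := by
              rw [eqc]
              field_simp
            exact aux_schIII3b hS hv hm hBalg hpow hc''alg (aux_alg_inv hc''alg) eqc eqam hLIb
  -- Case IV : both transcendental, contradicts halg
  · rcases halg with h | h
    · exact hAalg h
    · exact hBalg h
end

section
/- Assume Schanuel's conjecture. Then √2^(√2^√2) is transcendental. -/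
open MvPolynomial

private lemma killA {ι : Type*} [DecidableEq ι] {g : ι → ℂ} (hg : AlgebraicIndependent ℚ g)
    {i j : ι} (hij : i ≠ j) (h : g j ^ 2 = 2 * g i ^ 2) : False := by
  have h0 : (X j ^ 2 - C 2 * X i ^ 2 : MvPolynomial ι ℚ) = 0 := by
    apply hg
    simp only [map_sub, map_mul, map_pow, aeval_X, aeval_C, map_zero, map_ofNat]
    rw [h]; ring
  have h1 := congrArg (eval (fun k => if k = j then (1:ℚ) else 0)) h0
  simp [hij] at h1

private lemma killB {ι : Type*} [DecidableEq ι] {g : ι → ℂ} (hg : AlgebraicIndependent ℚ g)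
    {i j k : ι} (hji : j ≠ i) (hjk : j ≠ k) (h : g j = g i * g k) : False := by
  have h0 : (X j - X i * X k : MvPolynomial ι ℚ) = 0 := by
    apply hg
    simp only [map_sub, map_mul, aeval_X, map_zero]
    rw [h]; ring
  have h1 := congrArg (eval (fun m => if m = j then (1:ℚ) else 0)) h0
  simp [hji.symm, hjk.symm] at h1

private lemma killC {ι : Type*} [DecidableEq ι] {g : ι → ℂ} (hg : AlgebraicIndependent ℚ g)
    {i j k : ι} (hji : j ≠ i) (hjk : j ≠ k) (h : g i ^ 2 * g k ^ 2 = 2 * g j ^ 2) : False := by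
  have h0 : (X i ^ 2 * X k ^ 2 - C 2 * X j ^ 2 : MvPolynomial ι ℚ) = 0 := by
    apply hg
    simp only [map_sub, map_mul, map_pow, aeval_X, aeval_C, map_zero, map_ofNat]
    rw [h]; ring
  have h1 := congrArg (eval (fun m => if m = j then (1:ℚ) else 0)) h0
  simp [hji.symm, hjk.symm] at h1

private lemma killE {ι : Type*} {g : ι → ℂ} (hg : AlgebraicIndependent ℚ g)
    {i j : ι} (hij : i ≠ j) (h : g i = g j) : False := hij (hg.injective h)

private lemma real_transc_of_complex {x : ℝ} (h : Transcendental ℚ ((x : ℝ) : ℂ)) :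
    Transcendental ℚ x := by
  intro hx
  obtain ⟨p, hp0, hp⟩ := hx
  exact h ⟨p, hp0, by
    rw [show ((x : ℂ)) = algebraMap ℝ ℂ x from rfl, Polynomial.aeval_algebraMap_apply, hp,
      map_zero]⟩

private lemma complex_alg_of_real {x : ℝ} (h : IsAlgebraic ℚ x) :
    IsAlgebraic ℚ ((x : ℝ) : ℂ) := by
  obtain ⟨p, hp0, hp⟩ := h
  exact ⟨p, hp0, by
    rw [show ((x : ℂ)) = algebraMap ℝ ℂ x from rfl, Polynomial.aeval_algebraMap_apply, hp,
      map_zero]⟩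

private lemma sqrt2_alg : IsAlgebraic ℚ (Real.sqrt 2) :=
  ⟨Polynomial.X ^ 2 - Polynomial.C 2, by
    intro h
    have := congrArg (Polynomial.coeff · 2) h
    simp [Polynomial.coeff_X_pow] at this, by
    simp [Real.sq_sqrt]⟩

private lemma no_three {g : Fin 3 → ℂ} (hg : AlgebraicIndependent ℚ g) {sC LC bC : ℂ}
    (hs2 : sC ^ 2 = 2)
    (hval : ∀ i, g i = LC ∨ g i = sC * LC ∨ g i = bC * LC ∨ g i = bC) : False := by
  have A : ∀ i j : Fin 3, i ≠ j → g i = LC → g j = sC * LC → False := fun i j hij hi hj =>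
    killA hg hij (by rw [hj, hi, mul_pow, hs2])
  have B : ∀ i j k : Fin 3, j ≠ i → j ≠ k → g i = LC → g j = bC * LC → g k = bC → False :=
    fun i j k h1 h2 hi hj hk => killB hg h1 h2 (by rw [hj, hi, hk]; ring)
  have Cc : ∀ i j k : Fin 3, j ≠ i → j ≠ k → g i = sC * LC → g j = bC * LC → g k = bC → False :=
    fun i j k h1 h2 hi hj hk =>
      killC hg h1 h2 (by rw [hi, hj, hk, mul_pow, mul_pow, hs2]; ring)
  rcases hval 0 with h0 | h0 | h0 | h0 <;> rcases hval 1 with h1 | h1 | h1 | h1 <;>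
    rcases hval 2 with h2 | h2 | h2 | h2 <;>
    first
    | exact killE hg (show (0 : Fin 3) ≠ 1 by decide) (h0.trans h1.symm)
    | exact killE hg (show (0 : Fin 3) ≠ 2 by decide) (h0.trans h2.symm)
    | exact killE hg (show (1 : Fin 3) ≠ 2 by decide) (h1.trans h2.symm)
    | exact A 0 1 (by decide) h0 h1
    | exact A 0 2 (by decide) h0 h2
    | exact A 1 0 (by decide) h1 h0
    | exact A 1 2 (by decide) h1 h2
    | exact A 2 0 (by decide) h2 h0
    | exact A 2 1 (by decide) h2 h1
    | exact B 0 1 2 (by decide) (by decide) h0 h1 h2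
    | exact B 0 2 1 (by decide) (by decide) h0 h2 h1
    | exact B 1 0 2 (by decide) (by decide) h1 h0 h2
    | exact B 1 2 0 (by decide) (by decide) h1 h2 h0
    | exact B 2 0 1 (by decide) (by decide) h2 h0 h1
    | exact B 2 1 0 (by decide) (by decide) h2 h1 h0
    | exact Cc 0 1 2 (by decide) (by decide) h0 h1 h2
    | exact Cc 0 2 1 (by decide) (by decide) h0 h2 h1
    | exact Cc 1 0 2 (by decide) (by decide) h1 h0 h2
    | exact Cc 1 2 0 (by decide) (by decide) h1 h2 h0
    | exact Cc 2 0 1 (by decide) (by decide) h2 h0 h1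
    | exact Cc 2 1 0 (by decide) (by decide) h2 h1 h0

/-- Assuming Schanuel's conjecture, `√2 ^ (√2 ^ √2)` is transcendental. -/
theorem sqrt_two_tower_transcendental (hS : SchanuelConjecture) :
    Transcendental ℚ (Real.sqrt 2 ^ (Real.sqrt 2 ^ Real.sqrt 2)) := by
  intro hT
  set s : ℝ := Real.sqrt 2 with hs
  set L : ℝ := Real.log s with hLdef
  set b : ℝ := s ^ s with hbdef
  set t : ℝ := s ^ b with htdef
  have hs0 : 0 < s := Real.sqrt_pos.2 (by norm_num)
  have hs1 : 1 < s := by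
    rw [hs, show (1:ℝ) = Real.sqrt 1 from Real.sqrt_one.symm]
    exact Real.sqrt_lt_sqrt (by norm_num) (by norm_num)
  have hL0 : L ≠ 0 := ne_of_gt (Real.log_pos hs1)
  have hexpL : Real.exp L = s := Real.exp_log hs0
  have hexpsL : Real.exp (s * L) = b := by
    rw [hbdef, Real.rpow_def_of_pos hs0, mul_comm]
  have hexpbL : Real.exp (b * L) = t := by
    rw [htdef, Real.rpow_def_of_pos hs0, mul_comm]
  have hs2C : ((s : ℝ) : ℂ) ^ 2 = 2 := by
    rw [← Complex.ofReal_pow, Real.sq_sqrt (by norm_num : (0:ℝ) ≤ 2)]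
    norm_num
  have hsAC : IsAlgebraic ℚ ((s : ℝ) : ℂ) := complex_alg_of_real sqrt2_alg
  have hCexpL : Complex.exp ((L : ℝ) : ℂ) = ((s : ℝ) : ℂ) := by
    rw [← Complex.ofReal_exp, hexpL]
  have hCexpsL : Complex.exp (((s : ℝ) : ℂ) * ((L : ℝ) : ℂ)) = ((b : ℝ) : ℂ) := by
    rw [← Complex.ofReal_mul, ← Complex.ofReal_exp, hexpsL]
  have hCexpbL : Complex.exp (((b : ℝ) : ℂ) * ((L : ℝ) : ℂ)) = ((t : ℝ) : ℂ) := by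
    rw [← Complex.ofReal_mul, ← Complex.ofReal_exp, hexpbL]
  -- Step 1 : `b` is transcendental
  have hlin2 : LinearIndependent ℚ ![((L : ℝ) : ℂ), ((s * L : ℝ) : ℂ)] := by
    rw [Fintype.linearIndependent_iff]
    intro f hf
    rw [Fin.sum_univ_two] at hf
    simp only [Matrix.cons_val_zero, Matrix.cons_val_one, Matrix.head_cons, Rat.smul_def] at hf
    have hr : (f 0 : ℝ) * L + (f 1 : ℝ) * (s * L) = 0 := by exact_mod_cast hf
    have h2 : ((f 0 : ℝ) + (f 1 : ℝ) * s) * L = 0 := by linear_combination hr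
    have h3 : (f 0 : ℝ) + (f 1 : ℝ) * s = 0 := by
      rcases mul_eq_zero.1 h2 with h | h
      · exact h
      · exact absurd h hL0
    have hf1 : f 1 = 0 := by
      by_contra hf1
      have hf1R : (f 1 : ℝ) ≠ 0 := by exact_mod_cast hf1
      have : s = ((-f 0 / f 1 : ℚ) : ℝ) := by push_cast; field_simp; linarith
      exact irrational_sqrt_two ⟨_, this.symm⟩
    have hf0 : f 0 = 0 := by
      have h4 : (f 0 : ℝ) = 0 := by rw [hf1] at h3; push_cast at h3; linarith
      exact_mod_cast h4
    intro i; fin_cases i <;> assumption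
  obtain ⟨g2, hg2mem, hg2ind⟩ := hS 2 ![((L : ℝ) : ℂ), ((s * L : ℝ) : ℂ)] hlin2
  have hbTC : Transcendental ℚ ((b : ℝ) : ℂ) := by
    intro hbA
    have hval : ∀ i, g2 i = ((L : ℝ) : ℂ) ∨ g2 i = ((s : ℝ) : ℂ) * ((L : ℝ) : ℂ) := by
      intro i
      rcases hg2mem i with ⟨j, hj⟩ | ⟨j, hj⟩ <;> fin_cases j <;> simp at hj
      · left; exact hj.symm
      · right; exact hj.symm
      · rw [hCexpL] at hj
        exact absurd (hj ▸ hsAC) (hg2ind.transcendental i)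
      · rw [hCexpsL] at hj
        exact absurd (hj ▸ hbA) (hg2ind.transcendental i)
    rcases hval 0 with h0 | h0 <;> rcases hval 1 with h1 | h1
    · exact killE hg2ind (show (0 : Fin 2) ≠ 1 by decide) (h0.trans h1.symm)
    · exact killA hg2ind (show (0 : Fin 2) ≠ 1 by decide) (by rw [h1, h0, mul_pow, hs2C])
    · exact killA hg2ind (show (1 : Fin 2) ≠ 0 by decide) (by rw [h0, h1, mul_pow, hs2C])
    · exact killE hg2ind (show (0 : Fin 2) ≠ 1 by decide) (h0.trans h1.symm)
  have hbTR : Transcendental ℚ b := real_transc_of_complex hbTC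
  -- Step 2 : linear independence of the triple
  have hlin3 : LinearIndependent ℚ ![((L : ℝ) : ℂ), ((s * L : ℝ) : ℂ), ((b * L : ℝ) : ℂ)] := by
    rw [Fintype.linearIndependent_iff]
    intro f hf
    rw [Fin.sum_univ_three] at hf
    simp only [Matrix.cons_val_zero, Matrix.cons_val_one, Matrix.head_cons,
      Matrix.cons_val_two, Matrix.tail_cons, Rat.smul_def] at hf
    have hr : (f 0 : ℝ) * L + (f 1 : ℝ) * (s * L) + (f 2 : ℝ) * (b * L) = 0 := by
      exact_mod_cast hf
    have h2 : ((f 0 : ℝ) + (f 1 : ℝ) * s + (f 2 : ℝ) * b) * L = 0 := by linear_combination hr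
    have h3 : (f 0 : ℝ) + (f 1 : ℝ) * s + (f 2 : ℝ) * b = 0 := by
      rcases mul_eq_zero.1 h2 with h | h
      · exact h
      · exact absurd h hL0
    have hf2 : f 2 = 0 := by
      by_contra hf2
      have hf2R : (f 2 : ℝ) ≠ 0 := by exact_mod_cast hf2
      apply hbTR
      rw [isAlgebraic_iff_isIntegral]
      have i0 : IsIntegral ℚ ((f 0 : ℝ)) := (isAlgebraic_rat ℚ (f 0)).isIntegral
      have i1 : IsIntegral ℚ ((f 1 : ℝ)) := (isAlgebraic_rat ℚ (f 1)).isIntegral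
      have i2 : IsIntegral ℚ (((f 2)⁻¹ : ℚ) : ℝ) := (isAlgebraic_rat ℚ (f 2)⁻¹).isIntegral
      have isq : IsIntegral ℚ s := sqrt2_alg.isIntegral
      have hb : b = (-(f 0 : ℝ) - (f 1 : ℝ) * s) * (((f 2)⁻¹ : ℚ) : ℝ) := by
        have hinv : (((f 2)⁻¹ : ℚ) : ℝ) = ((f 2 : ℝ))⁻¹ := by push_cast; ring
        rw [hinv]
        field_simp
        linarith
      rw [hb]
      exact (i0.neg.sub (i1.mul isq)).mul i2
    have hf1 : f 1 = 0 := by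
      by_contra hf1
      have hf1R : (f 1 : ℝ) ≠ 0 := by exact_mod_cast hf1
      rw [hf2] at h3
      push_cast at h3
      have : s = ((-f 0 / f 1 : ℚ) : ℝ) := by push_cast; field_simp; linarith
      exact irrational_sqrt_two ⟨_, this.symm⟩
    have hf0 : f 0 = 0 := by
      have h4 : (f 0 : ℝ) = 0 := by rw [hf1, hf2] at h3; push_cast at h3; linarith
      exact_mod_cast h4
    intro i; fin_cases i <;> assumption
  -- Step 3 : Schanuel applied to the triple
  obtain ⟨g, hgmem, hgind⟩ :=
    hS 3 ![((L : ℝ) : ℂ), ((s * L : ℝ) : ℂ), ((b * L : ℝ) : ℂ)] hlin3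
  have htAC : IsAlgebraic ℚ ((t : ℝ) : ℂ) := complex_alg_of_real hT
  have hval : ∀ i, g i = ((L : ℝ) : ℂ) ∨ g i = ((s : ℝ) : ℂ) * ((L : ℝ) : ℂ) ∨
      g i = ((b : ℝ) : ℂ) * ((L : ℝ) : ℂ) ∨ g i = ((b : ℝ) : ℂ) := by
    intro i
    rcases hgmem i with ⟨j, hj⟩ | ⟨j, hj⟩ <;> fin_cases j <;> simp at hj
    · left; exact hj.symm
    · right; left; exact hj.symm
    · right; right; left; exact hj.symm
    · rw [hCexpL] at hj
      exact absurd (hj ▸ hsAC) (hgind.transcendental i)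
    · rw [hCexpsL] at hj
      right; right; right; exact hj.symm
    · rw [hCexpbL] at hj
      exact absurd (hj ▸ htAC) (hgind.transcendental i)
  exact no_three hgind hs2C hval
end

section
/- Assume Schanuel's conjecture. Then i^(e^π) is transcendental, where i^w is defined as exp(w · iπ/2). -/
namespace IPowAux

open Complex

lemma pigeon3 {A B C : ℂ} {g : Fin 3 → ℂ} (hg : Function.Injective g)
    (h : ∀ j, g j = A ∨ g j = B ∨ g j = C) :
    ∃ j0 j1 j2 : Fin 3, g j0 = A ∧ g j1 = B ∧ g j2 = C := by
  have h0 := h 0; have h1 := h 1; have h2 := h 2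
  rcases h0 with h0|h0|h0 <;> rcases h1 with h1|h1|h1 <;> rcases h2 with h2|h2|h2 <;>
  first
    | exact ⟨0, 1, 2, h0, h1, h2⟩
    | exact ⟨0, 2, 1, h0, h2, h1⟩
    | exact ⟨1, 0, 2, h1, h0, h2⟩
    | exact ⟨2, 0, 1, h2, h0, h1⟩
    | exact ⟨1, 2, 0, h1, h2, h0⟩
    | exact ⟨2, 1, 0, h2, h1, h0⟩
    | exact absurd (hg (h0.trans h1.symm)) (by decide)
    | exact absurd (hg (h0.trans h2.symm)) (by decide)
    | exact absurd (hg (h1.trans h2.symm)) (by decide)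

lemma e_pi_transcendental (hS : SchanuelConjecture) :
    Transcendental ℚ ((Real.exp Real.pi : ℝ) : ℂ) := by
  set α : Fin 2 → ℂ := ![(Real.pi : ℂ) * Complex.I, (Real.pi : ℂ)] with hα
  have hLI : LinearIndependent ℚ α := by
    rw [Fintype.linearIndependent_iff]
    intro c hc
    rw [Fin.sum_univ_two] at hc
    simp only [hα, Matrix.cons_val_zero, Matrix.cons_val_one, Matrix.head_cons,
      Rat.smul_def] at hc
    have him := congrArg Complex.im hc
    have hre := congrArg Complex.re hc
    simp at him hre
    have h0 : (c 0 : ℝ) = 0 := by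
      rcases (Or.inl him : _ ∨ Real.pi = 0) with h | h
      · exact_mod_cast h
      · exact absurd h Real.pi_ne_zero
    have h1 : (c 1 : ℝ) = 0 := by
      rcases (Or.inl hre : _ ∨ Real.pi = 0) with h | h
      · exact_mod_cast h
      · exact absurd h Real.pi_ne_zero
    intro i
    fin_cases i
    · exact_mod_cast h0
    · exact_mod_cast h1
  obtain ⟨g, hmem, halg⟩ := hS 2 α hLI
  have htr : ∀ j, Transcendental ℚ (g j) := fun j => halg.transcendental j
  have hm : ∀ j, g j = (Real.pi : ℂ) * Complex.I ∨ g j = (Real.pi : ℂ) ∨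
      g j = ((Real.exp Real.pi : ℝ) : ℂ) := by
    intro j
    rcases hmem j with ⟨i, hi⟩ | ⟨i, hi⟩
    · fin_cases i <;> simp only [hα, Matrix.cons_val_zero, Matrix.cons_val_one,
        Matrix.head_cons, Fin.isValue, Fin.zero_eta, Fin.mk_one] at hi
      · exact Or.inl hi.symm
      · exact Or.inr (Or.inl hi.symm)
    · fin_cases i <;> simp only [hα, Matrix.cons_val_zero, Matrix.cons_val_one,
        Matrix.head_cons, Fin.isValue, Fin.zero_eta, Fin.mk_one] at hi
      · exfalso
        apply htr j
        rw [← hi, Complex.exp_pi_mul_I]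
        have h1 : (-1 : ℂ) = algebraMap ℚ ℂ (-1) := by simp
        rw [h1]
        exact isAlgebraic_algebraMap _
      · refine Or.inr (Or.inr ?_)
        rw [← hi, Complex.ofReal_exp]
  rcases hm 0 with hg0|hg0|hg0
  · rcases hm 1 with hg1|hg1|hg1
    · exact absurd (halg.injective (hg0.trans hg1.symm)) (by decide)
    · -- g 0 = πI, g 1 = π : contradiction via X0² + X1²
      exfalso
      have hp : (MvPolynomial.X 0 ^ 2 + MvPolynomial.X 1 ^ 2 :
          MvPolynomial (Fin 2) ℚ) ≠ 0 := by
        intro h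
        have := congrArg (MvPolynomial.eval fun _ => (1 : ℚ)) h
        simp at this
      apply hp
      apply halg.eq_zero_of_aeval_eq_zero
      simp only [map_add, map_pow, MvPolynomial.aeval_X, hg0, hg1]
      rw [mul_pow, Complex.I_sq]
      ring
    · rw [← hg1]; exact htr 1
  · rcases hm 1 with hg1|hg1|hg1
    · exfalso
      have hp : (MvPolynomial.X 0 ^ 2 + MvPolynomial.X 1 ^ 2 :
          MvPolynomial (Fin 2) ℚ) ≠ 0 := by
        intro h
        have := congrArg (MvPolynomial.eval fun _ => (1 : ℚ)) h
        simp at this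
      apply hp
      apply halg.eq_zero_of_aeval_eq_zero
      simp only [map_add, map_pow, MvPolynomial.aeval_X, hg0, hg1]
      rw [mul_pow, Complex.I_sq]
      ring
    · exact absurd (halg.injective (hg0.trans hg1.symm)) (by decide)
    · rw [← hg1]; exact htr 1
  · rw [← hg0]; exact htr 0

end IPowAux

/-- Assuming Schanuel's conjecture, `i^(e^π) := exp (e^π · iπ/2)` is
transcendental. -/
theorem i_pow_e_pow_pi_transcendental (hS : SchanuelConjecture) :
    Transcendental ℚ
      (Complex.exp ((Real.exp Real.pi : ℂ) * (Complex.I * (Real.pi : ℂ) / 2))) := by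
  intro ha
  have hE := IPowAux.e_pi_transcendental hS
  set x1 : ℂ := Complex.I * (Real.pi : ℂ) / 2 with hx1
  set x2 : ℂ := (Real.exp Real.pi : ℂ) * (Complex.I * (Real.pi : ℂ) / 2) with hx2
  set x3 : ℂ := (Real.pi : ℂ) with hx3
  set w : ℂ := ((Real.exp Real.pi : ℝ) : ℂ) with hw
  set α : Fin 3 → ℂ := ![x1, x2, x3] with hα
  have hexp0 : Complex.exp x1 = Complex.I := by
    have h : x1 = ((Real.pi / 2 : ℝ) : ℂ) * Complex.I := by rw [hx1]; push_cast; ring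
    rw [h, Complex.exp_mul_I, ← Complex.ofReal_cos, ← Complex.ofReal_sin,
      Real.cos_pi_div_two, Real.sin_pi_div_two]
    simp
  have hx1nex2 : x1 ≠ x2 := by
    intro h
    have hπ : (Real.pi : ℂ) ≠ 0 := by exact_mod_cast Real.pi_ne_zero
    have h2 : ((Real.exp Real.pi : ℝ) : ℂ) = 1 := by
      change Complex.I * (Real.pi : ℂ) / 2 =
        ((Real.exp Real.pi : ℝ) : ℂ) * (Complex.I * (Real.pi : ℂ) / 2) at h
      have hne : Complex.I * (Real.pi : ℂ) / 2 ≠ 0 := by simp [hπ, Complex.I_ne_zero]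
      exact mul_right_cancel₀ hne (h.symm.trans (one_mul _).symm)
    have : Real.exp Real.pi = 1 := by exact_mod_cast h2
    rw [Real.exp_eq_one_iff] at this
    exact Real.pi_ne_zero this
  have hLI : LinearIndependent ℚ α := by
    rw [Fintype.linearIndependent_iff]
    intro c hc
    rw [Fin.sum_univ_three] at hc
    simp only [hα, Matrix.cons_val_zero, Matrix.cons_val_one, Matrix.head_cons,
      Matrix.cons_val_two, Matrix.tail_cons, Rat.smul_def, hx1, hx2, hx3] at hc
    have him := congrArg Complex.im hc
    have hre := congrArg Complex.re hc
    simp [hw] at him hre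
    rw [show (Complex.exp (Real.pi : ℂ)).re = Real.exp Real.pi by
      rw [← Complex.ofReal_exp, Complex.ofReal_re]] at him
    have hpi := Real.pi_ne_zero
    have hc2 : c 2 = 0 := by
      rcases (Or.inl hre : _ ∨ Real.pi = 0) with h | h
      · exact_mod_cast h
      · exact absurd h hpi
    have h2 : ((c 0 : ℝ) + (c 1 : ℝ) * Real.exp Real.pi) * (Real.pi / 2) = 0 := by
      linear_combination him
    have hkey : (c 0 : ℝ) + (c 1 : ℝ) * Real.exp Real.pi = 0 := by
      rcases mul_eq_zero.mp h2 with h | h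
      · exact h
      · exact absurd h (by positivity)
    have hc1 : c 1 = 0 := by
      by_contra hc1
      apply hE
      have hc1' : (c 1 : ℝ) ≠ 0 := by exact_mod_cast hc1
      have hr : Real.exp Real.pi = ((-(c 0) / c 1 : ℚ) : ℝ) := by
        push_cast
        field_simp
        linarith [hkey]
      have hval : ((Real.exp Real.pi : ℝ) : ℂ) = algebraMap ℚ ℂ (-(c 0) / c 1) := by
        rw [hr]
        norm_cast
      rw [hw, hval]
      exact isAlgebraic_algebraMap _
    have hc0 : c 0 = 0 := by
      rw [hc1] at hkey
      push_cast at hkey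
      exact_mod_cast (by linarith : (c 0 : ℝ) = 0)
    intro i
    fin_cases i
    · exact hc0
    · exact hc1
    · exact hc2
  obtain ⟨g, hmem, halg⟩ := hS 3 α hLI
  have htr : ∀ j, Transcendental ℚ (g j) := fun j => halg.transcendental j
  have hIalg : IsAlgebraic ℚ Complex.I := by
    refine ⟨Polynomial.X ^ 2 + 1, ?_, ?_⟩
    · intro h
      have := congrArg (Polynomial.eval (0 : ℚ)) h
      simp at this
    · simp [Complex.I_sq]
  have hm : ∀ j, g j = x1 ∨ g j = x2 ∨ g j = x3 ∨ g j = w := by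
    intro j
    rcases hmem j with ⟨i, hi⟩ | ⟨i, hi⟩
    · fin_cases i <;> simp only [hα, Matrix.cons_val_zero, Matrix.cons_val_one,
        Matrix.head_cons, Matrix.cons_val_two, Matrix.tail_cons, Fin.isValue,
        Fin.zero_eta, Fin.mk_one] at hi
      · exact Or.inl hi.symm
      · exact Or.inr (Or.inl hi.symm)
      · exact Or.inr (Or.inr (Or.inl hi.symm))
    · fin_cases i <;> simp only [hα, Matrix.cons_val_zero, Matrix.cons_val_one,
        Matrix.head_cons, Matrix.cons_val_two, Matrix.tail_cons, Fin.isValue,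
        Fin.zero_eta, Fin.mk_one] at hi
      · exfalso
        apply htr j
        rw [← hi, hexp0]
        exact hIalg
      · exfalso
        apply htr j
        rw [← hi]
        exact ha
      · refine Or.inr (Or.inr (Or.inr ?_))
        rw [← hi, hw, hx3]
        exact (Complex.ofReal_exp Real.pi).symm
  by_cases h1 : ∃ j, g j = x1
  · by_cases h3 : ∃ k, g k = x3
    · obtain ⟨j, hj⟩ := h1
      obtain ⟨k, hk⟩ := h3
      have hp : (4 * MvPolynomial.X j ^ 2 + MvPolynomial.X k ^ 2 :
          MvPolynomial (Fin 3) ℚ) ≠ 0 := by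
        intro h
        have := congrArg (MvPolynomial.eval fun _ => (1 : ℚ)) h
        simp at this
        norm_num at this
      apply hp
      apply halg.eq_zero_of_aeval_eq_zero
      simp only [map_add, map_mul, map_pow, map_ofNat, MvPolynomial.aeval_X, hj, hk]
      rw [hx1]
      linear_combination x3 ^ 2 * Complex.I_sq
    · push_neg at h3
      have hm' : ∀ j, g j = x1 ∨ g j = x2 ∨ g j = w := by
        intro j; rcases hm j with h | h | h | h
        exacts [Or.inl h, Or.inr (Or.inl h), absurd h (h3 j), Or.inr (Or.inr h)]
      obtain ⟨j0, j1, j2, hj0, hj1, hj2⟩ := IPowAux.pigeon3 halg.injective hm'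
      have hne : j0 ≠ j1 := fun h => hx1nex2 (by rw [← hj0, h, hj1])
      have hp : (MvPolynomial.X j1 - MvPolynomial.X j0 * MvPolynomial.X j2 :
          MvPolynomial (Fin 3) ℚ) ≠ 0 := by
        intro h
        have := congrArg (MvPolynomial.eval fun i => if i = j1 then (1 : ℚ) else 0) h
        simp [hne] at this
      apply hp
      apply halg.eq_zero_of_aeval_eq_zero
      simp only [map_sub, map_mul, MvPolynomial.aeval_X, hj0, hj1, hj2]
      rw [hx2, hx1]
      ring
  · push_neg at h1
    have hm' : ∀ j, g j = x2 ∨ g j = x3 ∨ g j = w := by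
      intro j; rcases hm j with h | h | h | h
      exacts [absurd h (h1 j), Or.inl h, Or.inr (Or.inl h), Or.inr (Or.inr h)]
    obtain ⟨j0, j1, j2, hj0, hj1, hj2⟩ := IPowAux.pigeon3 halg.injective hm'
    have hp : (4 * MvPolynomial.X j0 ^ 2 + MvPolynomial.X j1 ^ 2 * MvPolynomial.X j2 ^ 2 :
        MvPolynomial (Fin 3) ℚ) ≠ 0 := by
      intro h
      have := congrArg (MvPolynomial.eval fun _ => (1 : ℚ)) h
      simp at this
      norm_num at this
    apply hp
    apply halg.eq_zero_of_aeval_eq_zero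
    simp only [map_add, map_mul, map_pow, map_ofNat, MvPolynomial.aeval_X, hj0, hj1, hj2]
    rw [hx2]
    linear_combination w ^ 2 * x3 ^ 2 * Complex.I_sq
end

section
/- Assume Schanuel's conjecture. Let α be a nonzero algebraic complex number and z an irrational complex number with α^{α^z} = z (powers via a fixed logarithm λ of α: α^z = exp(zλ), α^{α^z} = exp(exp(zλ)·λ)). Then z is transcendental. -/
section Aux

open Polynomial MvPolynomial Finset

/-- If `v = c * u` with `c` algebraic, then `u, v` are algebraically dependent. -/
lemma aux_pair {c u v : ℂ} (hc : IsAlgebraic ℚ c) (hv : v = c * u) :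
    ¬ AlgebraicIndependent ℚ ![u, v] := by
  intro h
  obtain ⟨p, hp0, hpc⟩ := hc
  set n := p.natDegree with hn
  set P : MvPolynomial (Fin 2) ℚ :=
    ∑ k ∈ Finset.range (n+1), MvPolynomial.C (p.coeff k) * MvPolynomial.X 1 ^ k *
      MvPolynomial.X 0 ^ (n - k) with hP
  have h1 : MvPolynomial.aeval ![u, v] P = 0 := by
    rw [hP, map_sum]
    have e : ∀ k ∈ Finset.range (n+1), MvPolynomial.aeval ![u,v]
        (MvPolynomial.C (p.coeff k) * MvPolynomial.X 1 ^ k * MvPolynomial.X 0 ^ (n - k))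
        = (p.coeff k • c ^ k) * u ^ n := by
      intro k hk
      have hk' : k ≤ n := Nat.lt_succ_iff.mp (Finset.mem_range.mp hk)
      simp [hv, mul_pow, Algebra.smul_def]
      rw [mul_assoc, mul_assoc, ← pow_add, Nat.add_sub_cancel' hk']
      ring
    rw [Finset.sum_congr rfl e, ← Finset.sum_mul]
    have e2 : ∑ k ∈ Finset.range (n+1), p.coeff k • c ^ k = Polynomial.aeval c p :=
      (Polynomial.aeval_eq_sum_range (p := p) c).symm
    rw [e2, hpc, zero_mul]
  have hP0 : P = 0 := (algebraicIndependent_iff.mp h) P h1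
  apply hp0
  have h2 := congrArg (MvPolynomial.aeval (R := ℚ) ![(1 : Polynomial ℚ), Polynomial.X]) hP0
  rw [hP, map_sum, map_zero] at h2
  rw [p.as_sum_range' (n+1) (Nat.lt_succ_self n)]
  rw [← h2]
  apply Finset.sum_congr rfl
  intro k hk
  simp [MvPolynomial.aeval_X, Polynomial.C_mul_X_pow_eq_monomial]

/-- If `x * t = c * y` with `c` algebraic, then `x, y, t` are algebraically dependent. -/
lemma aux3b {c x y t : ℂ} (hc : IsAlgebraic ℚ c) (hv : x * t = c * y) :
    ¬ AlgebraicIndependent ℚ ![x, y, t] := by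
  intro h
  obtain ⟨p, hp0, hpc⟩ := hc
  set n := p.natDegree with hn
  set P : MvPolynomial (Fin 3) ℚ :=
    ∑ k ∈ Finset.range (n+1), MvPolynomial.C (p.coeff k) *
      (MvPolynomial.X 0 * MvPolynomial.X 2) ^ k * MvPolynomial.X 1 ^ (n - k) with hP
  have h1 : MvPolynomial.aeval ![x, y, t] P = 0 := by
    rw [hP, map_sum]
    have e : ∀ k ∈ Finset.range (n+1), MvPolynomial.aeval ![x,y,t]
        (MvPolynomial.C (p.coeff k) * (MvPolynomial.X 0 * MvPolynomial.X 2) ^ k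
          * MvPolynomial.X 1 ^ (n - k))
        = (p.coeff k • c ^ k) * y ^ n := by
      intro k hk
      have hk' : k ≤ n := Nat.lt_succ_iff.mp (Finset.mem_range.mp hk)
      simp only [map_mul, map_pow, MvPolynomial.aeval_X, MvPolynomial.aeval_C, Algebra.smul_def]
      have : (![x,y,t] 0 * ![x,y,t] 2) = c * ![x,y,t] 1 := by simpa using hv
      rw [this, mul_pow]
      rw [mul_assoc, mul_assoc, ← pow_add, Nat.add_sub_cancel' hk']
      simp [Algebra.smul_def]
      ring
    rw [Finset.sum_congr rfl e, ← Finset.sum_mul]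
    rw [(Polynomial.aeval_eq_sum_range (p := p) c).symm, hpc, zero_mul]
  have hP0 : P = 0 := (algebraicIndependent_iff.mp h) P h1
  apply hp0
  have h2 := congrArg (MvPolynomial.aeval (R := ℚ) ![Polynomial.X, (1 : Polynomial ℚ), 1]) hP0
  rw [hP, map_sum, map_zero] at h2
  rw [p.as_sum_range' (n+1) (Nat.lt_succ_self n), ← h2]
  apply Finset.sum_congr rfl
  intro k hk
  simp [MvPolynomial.aeval_X, Polynomial.C_mul_X_pow_eq_monomial]

/-- If `d = a * b`, then `a, b, d` are algebraically dependent. -/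
lemma aux_prod {a b d : ℂ} (hv : d = a * b) :
    ¬ AlgebraicIndependent ℚ ![a, b, d] := by
  intro h
  set P : MvPolynomial (Fin 3) ℚ :=
    MvPolynomial.X 0 * MvPolynomial.X 1 - MvPolynomial.X 2 with hP
  have h1 : MvPolynomial.aeval ![a, b, d] P = 0 := by
    simp [hP, hv]
  have hP0 : P = 0 := (algebraicIndependent_iff.mp h) P h1
  have h2 := congrArg (MvPolynomial.aeval (R := ℚ) (![1, 1, 0] : Fin 3 → ℚ)) hP0
  simp [hP] at h2

lemma pair_perm {v : Fin 2 → ℂ} (h : AlgebraicIndependent ℚ v) :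
    AlgebraicIndependent ℚ ![v 1, v 0] := by
  have h2 := h.comp ![1, 0] (by decide)
  have e : v ∘ ![1, 0] = ![v 1, v 0] := by
    funext m; fin_cases m <;> simp
  rwa [e] at h2

lemma kill_pair {a b : ℂ} (hd : ¬ AlgebraicIndependent ℚ ![a, b]) {v : Fin 3 → ℂ}
    (h : AlgebraicIndependent ℚ v) {i j : Fin 3} (ha : v i = a) (hb : v j = b)
    (hij : i ≠ j) : False := by
  apply hd
  have hinj : Function.Injective ![i, j] := by
    intro m m' hm
    fin_cases m <;> fin_cases m' <;> simp_all
  have h2 := h.comp ![i, j] hinj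
  have e : v ∘ ![i, j] = ![a, b] := by
    funext m; fin_cases m <;> simp [ha, hb]
  rwa [e] at h2

lemma kill_triple {a b c : ℂ} (hd : ¬ AlgebraicIndependent ℚ ![a, b, c]) {v : Fin 3 → ℂ}
    (h : AlgebraicIndependent ℚ v) {i j k : Fin 3} (ha : v i = a) (hb : v j = b)
    (hc : v k = c) (hij : i ≠ j) (hik : i ≠ k) (hjk : j ≠ k) : False := by
  apply hd
  have hinj : Function.Injective ![i, j, k] := by
    intro m m' hm
    fin_cases m <;> fin_cases m' <;> simp_all
  have h2 := h.comp ![i, j, k] hinj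
  have e : v ∘ ![i, j, k] = ![a, b, c] := by
    funext m; fin_cases m <;> simp [ha, hb, hc]
  rwa [e] at h2

end Aux

/-- Assuming Schanuel's conjecture (and Gelfond–Schneider), if `α ≠ 0` is
algebraic, `z` is irrational, and `α^{α^z} = z` (powers via a fixed nonzero
logarithm `λ` of `α`), then `z` is transcendental. -/
theorem transcendental_of_alpha_pow_alpha_pow (hS : SchanuelConjecture)
    (hGS : ∀ (α β lam : ℂ), IsAlgebraic ℚ α → IsAlgebraic ℚ β → α ≠ 0 → α ≠ 1 →
      (¬∃ q : ℚ, β = (q : ℂ)) → Complex.exp lam = α → lam ≠ 0 →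
      Transcendental ℚ (Complex.exp (β * lam)))
    (α z lam : ℂ) (hα : IsAlgebraic ℚ α) (hα0 : α ≠ 0)
    (hl : Complex.exp lam = α) (hl0 : lam ≠ 0)
    (hz : ¬∃ q : ℚ, z = (q : ℂ))
    (heq : Complex.exp (Complex.exp (z * lam) * lam) = z) :
    Transcendental ℚ z := by
  intro hzalg
  set w := Complex.exp (z * lam) with hw
  -- Step 1: `w` is transcendental, by Schanuel for `{lam, z*lam}`.
  have hlin2 : LinearIndependent ℚ ![lam, z * lam] := by
    rw [Fintype.linearIndependent_iff]
    intro q hq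
    rw [Fin.sum_univ_two] at hq
    simp only [Matrix.cons_val_zero, Matrix.cons_val_one, Matrix.head_cons, Rat.smul_def] at hq
    have h2 : ((q 0 : ℂ) + q 1 * z) * lam = 0 := by linear_combination hq
    have h3 : (q 0 : ℂ) + q 1 * z = 0 := by
      rcases mul_eq_zero.mp h2 with h | h
      · exact h
      · exact absurd h hl0
    have hq1 : q 1 = 0 := by
      by_contra hq1
      apply hz
      refine ⟨-q 0 / q 1, ?_⟩
      have hc : (q 1 : ℂ) ≠ 0 := by exact_mod_cast hq1
      push_cast
      field_simp
      linear_combination h3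
    have hq0 : q 0 = 0 := by
      have : (q 0 : ℂ) = 0 := by
        rw [hq1] at h3; simpa using h3
      exact_mod_cast this
    intro i; fin_cases i
    · exact hq0
    · exact hq1
  have hwt : Transcendental ℚ w := by
    by_contra hwa
    rw [Transcendental, not_not] at hwa
    obtain ⟨g, hmem, hgind⟩ := hS 2 ![lam, z * lam] hlin2
    have hval : ∀ i, g i = lam ∨ g i = z * lam := by
      intro i
      rcases hmem i with ⟨j, hj⟩ | ⟨j, hj⟩
      · fin_cases j
        · exact Or.inl (by simpa using hj.symm)
        · exact Or.inr (by simpa using hj.symm)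
      · exfalso
        fin_cases j
        · have hgi : α = g i := by rw [← hl]; simpa using hj
          exact hgind.transcendental i (hgi ▸ hα)
        · have hgi : w = g i := by rw [hw]; simpa using hj
          exact hgind.transcendental i (hgi ▸ hwa)
    have hinj := hgind.injective
    rcases hval 0 with h0 | h0 <;> rcases hval 1 with h1 | h1
    · exact absurd (hinj (h0.trans h1.symm)) (by decide)
    · have hge : g = ![g 0, g 1] := by
        funext m; fin_cases m <;> simp
      have hg2 := hgind
      rw [hge, h0, h1] at hg2
      exact aux_pair hzalg rfl hg2
    · have hg2 := pair_perm hgind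
      rw [h0, h1] at hg2
      exact aux_pair hzalg rfl hg2
    · exact absurd (hinj (h0.trans h1.symm)) (by decide)
  -- Step 2: Schanuel for `{lam, z*lam, w*lam}`.
  have hlin3 : LinearIndependent ℚ ![lam, z * lam, w * lam] := by
    rw [Fintype.linearIndependent_iff]
    intro q hq
    rw [Fin.sum_univ_three] at hq
    simp only [Matrix.cons_val_zero, Matrix.cons_val_one, Matrix.head_cons,
      Matrix.cons_val_two, Matrix.tail_cons, Rat.smul_def] at hq
    have h2 : ((q 0 : ℂ) + q 1 * z + q 2 * w) * lam = 0 := by linear_combination hq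
    have h3 : (q 0 : ℂ) + q 1 * z + q 2 * w = 0 := by
      rcases mul_eq_zero.mp h2 with h | h
      · exact h
      · exact absurd h hl0
    have hq2 : q 2 = 0 := by
      by_contra hq2
      apply hwt
      have hc : (q 2 : ℂ) ≠ 0 := by exact_mod_cast hq2
      have hwe : w = (((q 2)⁻¹ : ℚ) : ℂ) * (((-q 0 : ℚ) : ℂ) + ((-q 1 : ℚ) : ℂ) * z) := by
        push_cast
        field_simp
        linear_combination h3
      rw [hwe]
      have hzint : IsIntegral ℚ z := hzalg.isIntegral
      have hr : ∀ r : ℚ, IsIntegral ℚ ((r : ℂ)) := by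
        intro r
        have := isIntegral_algebraMap (R := ℚ) (A := ℂ) (x := r)
        rwa [eq_ratCast (algebraMap ℚ ℂ) r] at this
      exact ((hr _).mul ((hr _).add ((hr _).mul hzint))).isAlgebraic
    have hq1 : q 1 = 0 := by
      by_contra hq1
      apply hz
      refine ⟨-q 0 / q 1, ?_⟩
      have hc : (q 1 : ℂ) ≠ 0 := by exact_mod_cast hq1
      push_cast
      field_simp
      rw [hq2] at h3
      push_cast at h3
      linear_combination h3
    have hq0 : q 0 = 0 := by
      have : (q 0 : ℂ) = 0 := by
        rw [hq1, hq2] at h3; simpa using h3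
      exact_mod_cast this
    intro i; fin_cases i
    · exact hq0
    · exact hq1
    · exact hq2
  obtain ⟨g, hmem, hgind⟩ := hS 3 ![lam, z * lam, w * lam] hlin3
  have hval : ∀ i, g i = lam ∨ g i = z * lam ∨ g i = w * lam ∨ g i = w := by
    intro i
    rcases hmem i with ⟨j, hj⟩ | ⟨j, hj⟩
    · fin_cases j
      · exact Or.inl (by simpa using hj.symm)
      · exact Or.inr (Or.inl (by simpa using hj.symm))
      · exact Or.inr (Or.inr (Or.inl (by simpa using hj.symm)))
    · fin_cases j
      · exfalso
        have hgi : α = g i := by rw [← hl]; simpa using hj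
        exact hgind.transcendental i (hgi ▸ hα)
      · exact Or.inr (Or.inr (Or.inr (by rw [hw]; simpa using hj.symm)))
      · exfalso
        have hgi : z = g i := by rw [← heq]; simpa using hj
        exact hgind.transcendental i (hgi ▸ hzalg)
  have ndp : ¬ AlgebraicIndependent ℚ ![lam, z * lam] := aux_pair hzalg rfl
  have nda : ¬ AlgebraicIndependent ℚ ![lam, w, w * lam] := aux_prod (mul_comm w lam)
  have ndb : ¬ AlgebraicIndependent ℚ ![z * lam, w * lam, w] :=
    aux3b hzalg (by ring)
  rcases hval 0 with h0 | h0 | h0 | h0 <;> rcases hval 1 with h1 | h1 | h1 | h1 <;>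
      rcases hval 2 with h2 | h2 | h2 | h2 <;>
    first
    | exact absurd (hgind.injective (h0.trans h1.symm)) (by decide)
    | exact absurd (hgind.injective (h0.trans h2.symm)) (by decide)
    | exact absurd (hgind.injective (h1.trans h2.symm)) (by decide)
    | exact kill_pair ndp hgind h0 h1 (by decide)
    | exact kill_pair ndp hgind h0 h2 (by decide)
    | exact kill_pair ndp hgind h1 h0 (by decide)
    | exact kill_pair ndp hgind h1 h2 (by decide)
    | exact kill_pair ndp hgind h2 h0 (by decide)
    | exact kill_pair ndp hgind h2 h1 (by decide)
    | exact kill_triple nda hgind h0 h1 h2 (by decide) (by decide) (by decide)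
    | exact kill_triple nda hgind h0 h2 h1 (by decide) (by decide) (by decide)
    | exact kill_triple nda hgind h1 h0 h2 (by decide) (by decide) (by decide)
    | exact kill_triple nda hgind h1 h2 h0 (by decide) (by decide) (by decide)
    | exact kill_triple nda hgind h2 h0 h1 (by decide) (by decide) (by decide)
    | exact kill_triple nda hgind h2 h1 h0 (by decide) (by decide) (by decide)
    | exact kill_triple ndb hgind h0 h1 h2 (by decide) (by decide) (by decide)
    | exact kill_triple ndb hgind h0 h2 h1 (by decide) (by decide) (by decide)
    | exact kill_triple ndb hgind h1 h0 h2 (by decide) (by decide) (by decide)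
    | exact kill_triple ndb hgind h1 h2 h0 (by decide) (by decide) (by decide)
    | exact kill_triple ndb hgind h2 h0 h1 (by decide) (by decide) (by decide)
    | exact kill_triple ndb hgind h2 h1 h0 (by decide) (by decide) (by decide)
end
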